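/- arXiv:math/0507410 — 2 statements merged into one kernel-verified Lean document; each statement's English description precedes it below -/
import Mathlib

section
/- For ν, μ ∈ K with ν ≠ μ, the idempotents ξ_ν and ξ_μ of K[S₃] generate distinct minimal right ideals: ξ_ν·K[S₃] ≠ ξ_μ·K[S₃]. -/
open MonoidAlgebra

/-- The permutation `[1,3,2]`. -/
def p132 : Equiv.Perm (Fin 3) := Equiv.swap 1 2
/-- The permutation `[2,1,3]`. -/
def p213 : Equiv.Perm (Fin 3) := Equiv.swap 0 1
/-- The permutation `[2,3,1]`, sending `1↦2, 2↦3, 3↦1`. -/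
def p231 : Equiv.Perm (Fin 3) := Equiv.swap 0 2 * Equiv.swap 0 1
/-- The permutation `[3,1,2]`, sending `1↦3, 2↦1, 3↦2`. -/
def p312 : Equiv.Perm (Fin 3) := Equiv.swap 0 1 * Equiv.swap 0 2
/-- The permutation `[3,2,1]`. -/
def p321 : Equiv.Perm (Fin 3) := Equiv.swap 0 2

/-- `ξ_ν = (1/3)( e + ν·[1,3,2] + (1−ν)·[2,1,3] − ν·[2,3,1] + (ν−1)·[3,1,2] − [3,2,1] )`. -/
noncomputable def xiNu {K : Type*} [Field K] (ν : K) : MonoidAlgebra K (Equiv.Perm (Fin 3)) :=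
  single 1 (1 / 3) + single p132 (ν / 3) + single p213 ((1 - ν) / 3)
    + single p231 (-(ν / 3)) + single p312 ((ν - 1) / 3) + single p321 (-(1 / 3))

section Aux
variable {K : Type*} [Field K] [CharZero K]

private lemma mt_p132_p132 : p132 * p132 = (1 : Equiv.Perm (Fin 3)) := by decide
private lemma mt_p132_p213 : p132 * p213 = p312 := by decide
private lemma mt_p132_p231 : p132 * p231 = p321 := by decide
private lemma mt_p132_p312 : p132 * p312 = p213 := by decide
private lemma mt_p132_p321 : p132 * p321 = p231 := by decide
private lemma mt_p213_p132 : p213 * p132 = p231 := by decide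
private lemma mt_p213_p213 : p213 * p213 = (1 : Equiv.Perm (Fin 3)) := by decide
private lemma mt_p213_p231 : p213 * p231 = p132 := by decide
private lemma mt_p213_p312 : p213 * p312 = p321 := by decide
private lemma mt_p213_p321 : p213 * p321 = p312 := by decide
private lemma mt_p231_p132 : p231 * p132 = p213 := by decide
private lemma mt_p231_p213 : p231 * p213 = p321 := by decide
private lemma mt_p231_p231 : p231 * p231 = p312 := by decide
private lemma mt_p231_p312 : p231 * p312 = (1 : Equiv.Perm (Fin 3)) := by decide
private lemma mt_p231_p321 : p231 * p321 = p132 := by decide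
private lemma mt_p312_p132 : p312 * p132 = p321 := by decide
private lemma mt_p312_p213 : p312 * p213 = p132 := by decide
private lemma mt_p312_p231 : p312 * p231 = (1 : Equiv.Perm (Fin 3)) := by decide
private lemma mt_p312_p312 : p312 * p312 = p231 := by decide
private lemma mt_p312_p321 : p312 * p321 = p213 := by decide
private lemma mt_p321_p132 : p321 * p132 = p312 := by decide
private lemma mt_p321_p213 : p321 * p213 = p231 := by decide
private lemma mt_p321_p231 : p321 * p231 = p213 := by decide
private lemma mt_p321_p312 : p321 * p312 = p132 := by decide
private lemma mt_p321_p321 : p321 * p321 = (1 : Equiv.Perm (Fin 3)) := by decide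

/-- basis element -/
private noncomputable def bas (g : Equiv.Perm (Fin 3)) : MonoidAlgebra K (Equiv.Perm (Fin 3)) :=
  single g 1

omit [CharZero K] in
private lemma sm (g : Equiv.Perm (Fin 3)) (c : K) :
    (single g c : MonoidAlgebra K (Equiv.Perm (Fin 3))) = c • bas g := by
  rw [bas, MonoidAlgebra.smul_single', mul_one]

/-- the annihilating element -/
private noncomputable def bb (μ : K) : MonoidAlgebra K (Equiv.Perm (Fin 3)) :=
  single 1 (1 / 3) + single p132 (-(μ / 3)) + single p213 ((μ - 1) / 3)
    + single p231 ((μ - 1) / 3) + single p312 (-(μ / 3)) + single p321 (1 / 3)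

private lemma bb_mul_xiNu (μ ν : K) :
    bb μ * xiNu ν = single p132 ((ν - μ) / 3) + single p213 ((μ - ν) / 3)
      + single p231 ((μ - ν) / 3) + single p312 ((ν - μ) / 3) := by
  simp only [bb, xiNu, add_mul, mul_add, single_mul_single, one_mul, mul_one,
    mt_p132_p132, mt_p132_p213, mt_p132_p231, mt_p132_p312, mt_p132_p321,
    mt_p213_p132, mt_p213_p213, mt_p213_p231, mt_p213_p312, mt_p213_p321,
    mt_p231_p132, mt_p231_p213, mt_p231_p231, mt_p231_p312, mt_p231_p321,
    mt_p312_p132, mt_p312_p213, mt_p312_p231, mt_p312_p312, mt_p312_p321,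
    mt_p321_p132, mt_p321_p213, mt_p321_p231, mt_p321_p312, mt_p321_p321]
  simp only [sm]
  match_scalars <;> field_simp <;> ring

end Aux

/-- For `ν ≠ μ`, the idempotents `ξ_ν` and `ξ_μ` generate distinct (minimal) right ideals
of `K[S₃]`: `ξ_ν·K[S₃] ≠ ξ_μ·K[S₃]`. -/
theorem xiNu_distinct_right_ideals {K : Type*} [Field K] [CharZero K] (ν μ : K) (h : ν ≠ μ) :
    {x : MonoidAlgebra K (Equiv.Perm (Fin 3)) | ∃ a, x = xiNu ν * a} ≠
      {x : MonoidAlgebra K (Equiv.Perm (Fin 3)) | ∃ a, x = xiNu μ * a} := by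
  intro heq
  have hmem : xiNu ν ∈ {x : MonoidAlgebra K (Equiv.Perm (Fin 3)) | ∃ a, x = xiNu ν * a} :=
    ⟨1, (mul_one _).symm⟩
  rw [heq] at hmem
  obtain ⟨a, ha⟩ := hmem
  have h0 : bb μ * xiNu ν = 0 := by
    rw [ha, ← mul_assoc, bb_mul_xiNu]
    have : ((μ - μ) / 3 : K) = 0 := by ring
    simp [this]
  rw [bb_mul_xiNu] at h0
  have h0' : (Finsupp.single p132 ((ν - μ) / 3) + Finsupp.single p213 ((μ - ν) / 3)
      + Finsupp.single p231 ((μ - ν) / 3) + Finsupp.single p312 ((ν - μ) / 3)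
      : Equiv.Perm (Fin 3) →₀ K) = 0 := congrArg MonoidAlgebra.coeff h0
  have h1 := DFunLike.congr_fun h0' p132
  simp only [Finsupp.add_apply, Finsupp.single_apply, Finsupp.coe_zero, Pi.zero_apply,
    show ¬ p213 = p132 by decide, show ¬ p231 = p132 by decide,
    show ¬ p312 = p132 by decide, if_true, if_false, add_zero] at h1
  have h2 : ((ν - μ) / 3 : K) = 0 := by simpa using h1
  have h3 : (ν - μ : K) = 0 := by
    rcases div_eq_zero_iff.mp h2 with h3 | h3
    · exact h3
    · exact absurd h3 three_ne_zero
  exact h (sub_eq_zero.mp h3)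
end

section
/- A 5-linear form T on a finite-dimensional real vector space is an algebraic covariant derivative curvature tensor if and only if y_{t'}* T = 24·T, where y_{t'} is the Young symmetrizer of the standard tableau of shape (3,2) with rows (1,3,5),(2,4). -/
open MonoidAlgebra

/-- Horizontal permutations of the tableau `t'` with rows `{1,3,5}`, `{2,4}` (0-indexed
`{0,2,4}`, `{1,3}`). -/
def isHoriz' (p : Equiv.Perm (Fin 5)) : Prop :=
  (∀ i ∈ ({0, 2, 4} : Finset (Fin 5)), p i ∈ ({0, 2, 4} : Finset (Fin 5))) ∧
  (∀ i ∈ ({1, 3} : Finset (Fin 5)), p i ∈ ({1, 3} : Finset (Fin 5)))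

/-- Vertical permutations of `t'`: preserving the columns `{1,2}`, `{3,4}`, `{5}`
(0-indexed `{0,1}`, `{2,3}`, `{4}`). -/
def isVert' (q : Equiv.Perm (Fin 5)) : Prop :=
  (∀ i ∈ ({0, 1} : Finset (Fin 5)), q i ∈ ({0, 1} : Finset (Fin 5))) ∧
  (∀ i ∈ ({2, 3} : Finset (Fin 5)), q i ∈ ({2, 3} : Finset (Fin 5))) ∧
  q 4 = 4

instance : DecidablePred isHoriz' := fun p => by unfold isHoriz'; infer_instance
instance : DecidablePred isVert' := fun q => by unfold isVert'; infer_instance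

/-- `y_{t'}* = Σ_{p∈H_{t'}} Σ_{q∈V_{t'}} sign(q)·(p∘q)⁻¹ ∈ ℝ[S₅]`. -/
noncomputable def ytStar' : MonoidAlgebra ℝ (Equiv.Perm (Fin 5)) :=
  ∑ p ∈ Finset.univ.filter isHoriz', ∑ q ∈ Finset.univ.filter isVert',
    single (p * q)⁻¹ ((Equiv.Perm.sign q : ℤ) : ℝ)

/-- The action `(aT)(v₁,…,v₅) = Σ_p a(p)·T(v_{p(1)},…,v_{p(5)})` of `ℝ[S₅]` on 5-linear
forms. -/
noncomputable def act {V : Type*} [AddCommGroup V] [Module ℝ V]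
    (a : MonoidAlgebra ℝ (Equiv.Perm (Fin 5)))
    (T : MultilinearMap ℝ (fun _ : Fin 5 => V) ℝ) (v : Fin 5 → V) : ℝ :=
  a.coeff.sum fun p c => c * T (fun i => v (p i))

def HS : Finset (Equiv.Perm (Fin 5)) := {(1 : Equiv.Perm (Fin 5)), (Equiv.swap (2:Fin 5) 4), (Equiv.swap (1:Fin 5) 3), (Equiv.swap (1:Fin 5) 3 * Equiv.swap (2:Fin 5) 4), (Equiv.swap (0:Fin 5) 2), (Equiv.swap (0:Fin 5) 2 * Equiv.swap (2:Fin 5) 4), (Equiv.swap (0:Fin 5) 2 * Equiv.swap (1:Fin 5) 3), (Equiv.swap (0:Fin 5) 2 * Equiv.swap (1:Fin 5) 3 * Equiv.swap (2:Fin 5) 4), (Equiv.swap (0:Fin 5) 4 * Equiv.swap (2:Fin 5) 4), (Equiv.swap (0:Fin 5) 4), (Equiv.swap (0:Fin 5) 4 * Equiv.swap (1:Fin 5) 3 * Equiv.swap (2:Fin 5) 4), (Equiv.swap (0:Fin 5) 4 * Equiv.swap (1:Fin 5) 3)}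
def VS : Finset (Equiv.Perm (Fin 5)) := {(1 : Equiv.Perm (Fin 5)), (Equiv.swap (2:Fin 5) 3), (Equiv.swap (0:Fin 5) 1), (Equiv.swap (0:Fin 5) 1 * Equiv.swap (2:Fin 5) 3)}

theorem fH : Finset.univ.filter isHoriz' = HS := by decide
theorem fV : Finset.univ.filter isVert' = VS := by decide

theorem sumVS {M : Type*} [AddCommMonoid M] (f : Equiv.Perm (Fin 5) → M) :
    VS.sum f = f (1 : Equiv.Perm (Fin 5)) + (f (Equiv.swap (2:Fin 5) 3) +
      (f (Equiv.swap (0:Fin 5) 1) + f (Equiv.swap (0:Fin 5) 1 * Equiv.swap (2:Fin 5) 3))) := by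
  rw [VS, Finset.sum_insert (by decide), Finset.sum_insert (by decide),
    Finset.sum_insert (by decide), Finset.sum_singleton]

theorem sumHS {M : Type*} [AddCommMonoid M] (f : Equiv.Perm (Fin 5) → M) :
    HS.sum f = f (1 : Equiv.Perm (Fin 5)) + (f (Equiv.swap (2:Fin 5) 4) + (f (Equiv.swap (1:Fin 5) 3) + (f (Equiv.swap (1:Fin 5) 3 * Equiv.swap (2:Fin 5) 4) + (f (Equiv.swap (0:Fin 5) 2) + (f (Equiv.swap (0:Fin 5) 2 * Equiv.swap (2:Fin 5) 4) + (f (Equiv.swap (0:Fin 5) 2 * Equiv.swap (1:Fin 5) 3) + (f (Equiv.swap (0:Fin 5) 2 * Equiv.swap (1:Fin 5) 3 * Equiv.swap (2:Fin 5) 4) + (f (Equiv.swap (0:Fin 5) 4 * Equiv.swap (2:Fin 5) 4) + (f (Equiv.swap (0:Fin 5) 4) + (f (Equiv.swap (0:Fin 5) 4 * Equiv.swap (1:Fin 5) 3 * Equiv.swap (2:Fin 5) 4) + (f (Equiv.swap (0:Fin 5) 4 * Equiv.swap (1:Fin 5) 3)))))))))))) := by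
  rw [HS, Finset.sum_insert (by decide), Finset.sum_insert (by decide), Finset.sum_insert (by decide),
    Finset.sum_insert (by decide), Finset.sum_insert (by decide), Finset.sum_insert (by decide),
    Finset.sum_insert (by decide), Finset.sum_insert (by decide), Finset.sum_insert (by decide),
    Finset.sum_insert (by decide), Finset.sum_insert (by decide), Finset.sum_singleton]

theorem act_single {V : Type*} [AddCommGroup V] [Module ℝ V]
    (g : Equiv.Perm (Fin 5)) (c : ℝ) (T : MultilinearMap ℝ (fun _ : Fin 5 => V) ℝ)
    (v : Fin 5 → V) : act (single g c) T v = c * T (fun i => v (g i)) := by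
  unfold act
  rw [coeff_single]
  exact Finsupp.sum_single_index (zero_mul _)

theorem act_add {V : Type*} [AddCommGroup V] [Module ℝ V]
    (a b : MonoidAlgebra ℝ (Equiv.Perm (Fin 5)))
    (T : MultilinearMap ℝ (fun _ : Fin 5 => V) ℝ) (v : Fin 5 → V) :
    act (a + b) T v = act a T v + act b T v := by
  unfold act
  rw [coeff_add]
  exact Finsupp.sum_add_index' (fun g => zero_mul _) (fun g c1 c2 => add_mul c1 c2 _)

theorem funext5 {V : Type*} (v : Fin 5 → V) (g : Equiv.Perm (Fin 5)) :
    (fun i => v (g i)) = ![v (g 0), v (g 1), v (g 2), v (g 3), v (g 4)] := by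
  funext i; fin_cases i <;> rfl

set_option maxHeartbeats 4000000 in
theorem expand {V : Type*} [AddCommGroup V] [Module ℝ V]
    (T : MultilinearMap ℝ (fun _ : Fin 5 => V) ℝ) (v : Fin 5 → V) :
    act ytStar' T v = T ![v 0, v 1, v 2, v 3, v 4] + -T ![v 0, v 1, v 3, v 2, v 4] + -T ![v 1, v 0, v 2, v 3, v 4] + T ![v 1, v 0, v 3, v 2, v 4] + T ![v 0, v 1, v 4, v 3, v 2] + -T ![v 0, v 1, v 4, v 2, v 3] + -T ![v 1, v 0, v 4, v 3, v 2] + T ![v 1, v 0, v 4, v 2, v 3] + T ![v 0, v 3, v 2, v 1, v 4] + -T ![v 0, v 2, v 3, v 1, v 4] + -T ![v 1, v 3, v 2, v 0, v 4] + T ![v 1, v 2, v 3, v 0, v 4] + T ![v 0, v 3, v 4, v 1, v 2] + -T ![v 0, v 2, v 4, v 1, v 3] + -T ![v 1, v 3, v 4, v 0, v 2] + T ![v 1, v 2, v 4, v 0, v 3] + T ![v 2, v 1, v 0, v 3, v 4] + -T ![v 3, v 1, v 0, v 2, v 4] + -T ![v 2, v 0, v 1, v 3, v 4] + T ![v 3,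 v 0, v 1, v 2, v 4] + T ![v 4, v 1, v 0, v 3, v 2] + -T ![v 4, v 1, v 0, v 2, v 3] + -T ![v 4, v 0, v 1, v 3, v 2] + T ![v 4, v 0, v 1, v 2, v 3] + T ![v 2, v 3, v 0, v 1, v 4] + -T ![v 3, v 2, v 0, v 1, v 4] + -T ![v 2, v 3, v 1, v 0, v 4] + T ![v 3, v 2, v 1, v 0, v 4] + T ![v 4, v 3, v 0, v 1, v 2] + -T ![v 4, v 2, v 0, v 1, v 3] + -T ![v 4, v 3, v 1, v 0, v 2] + T ![v 4, v 2, v 1, v 0, v 3] + T ![v 2, v 1, v 4, v 3, v 0] + -T ![v 3, v 1, v 4, v 2, v 0] + -T ![v 2, v 0, v 4, v 3, v 1] + T ![v 3, v 0, v 4, v 2, v 1] + T ![v 4, v 1, v 2, v 3, v 0] + -T ![v 4, v 1, v 3, v 2, v 0] + -T ![v 4, v 0, v 2, v 3, v 1] + T ![v 4, v 0, v 3, v 2, v 1] + T ![v 2, v 3, v 4, v 1, v 0] + -T ![v 3, v 2, v 4, v 1, v 0] + -T ![v 2, v 3, v 4, v 0, v 1] + T ![v 3, v 2, v 4, v 0,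 v 1] + T ![v 4, v 3, v 2, v 1, v 0] + -T ![v 4, v 2, v 3, v 1, v 0] + -T ![v 4, v 3, v 2, v 0, v 1] + T ![v 4, v 2, v 3, v 0, v 1] := by
  rw [ytStar', fH, fV]
  simp only [sumVS, sumHS, act_add, act_single, funext5]
  simp (config := { decide := true }) [mul_inv_rev, Equiv.swap_inv, Equiv.Perm.mul_apply,
    Equiv.Perm.one_apply, Equiv.swap_apply_def, Equiv.Perm.sign_mul,
    Equiv.Perm.sign_swap (by decide : (2:Fin 5) ≠ 3),
    Equiv.Perm.sign_swap (by decide : (0:Fin 5) ≠ 1), Equiv.Perm.sign_one]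
  ring

theorem vec5_0 {V : Type*} (a b c d e : V) : ![a,b,c,d,e] 0 = a := rfl
theorem vec5_1 {V : Type*} (a b c d e : V) : ![a,b,c,d,e] 1 = b := rfl
theorem vec5_2 {V : Type*} (a b c d e : V) : ![a,b,c,d,e] 2 = c := rfl
theorem vec5_3 {V : Type*} (a b c d e : V) : ![a,b,c,d,e] 3 = d := rfl
theorem vec5_4 {V : Type*} (a b c d e : V) : ![a,b,c,d,e] 4 = e := rfl

set_option maxHeartbeats 4000000 in
/-- A 5-linear form `T` on a finite-dimensional real vector space is an algebraic
covariant derivative curvature tensor if and only if `y_{t'}* T = 24·T`, where `y_{t'}`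
is the Young symmetrizer of the standard tableau of shape `(3,2)` with rows `(1,3,5)`,
`(2,4)`. -/
theorem algebraic_covariant_derivative_curvature_tensor_iff_young
    {V : Type*} [AddCommGroup V] [Module ℝ V] [FiniteDimensional ℝ V]
    (T : MultilinearMap ℝ (fun _ : Fin 5 => V) ℝ) :
    ((∀ x y z w u, T ![x, y, z, w, u] = -T ![y, x, z, w, u]) ∧
     (∀ x y z w u, T ![x, y, z, w, u] = T ![z, w, x, y, u]) ∧
     (∀ x y z w u, T ![x, y, z, w, u] + T ![x, z, w, y, u] + T ![x, w, y, z, u] = 0) ∧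
     (∀ x y z w u, T ![x, y, z, w, u] + T ![x, y, w, u, z] + T ![x, y, u, z, w] = 0)) ↔
    (∀ v : Fin 5 → V, act ytStar' T v = 24 * T v) := by
  constructor
  · rintro ⟨h1, h2, h3, h4⟩ v
    rw [expand]
    have hv : T v = T ![v 0, v 1, v 2, v 3, v 4] := congrArg T (by funext i; fin_cases i <;> rfl)
    rw [hv]
    linear_combination (-21 : ℝ) * h1 (v 0) (v 1) (v 2) (v 3) (v 4) +
      (-1 : ℝ) * h2 (v 0) (v 1) (v 2) (v 3) (v 4) +
      (-4 : ℝ) * h3 (v 0) (v 1) (v 2) (v 3) (v 4) +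
      (3 : ℝ) * h4 (v 0) (v 1) (v 2) (v 3) (v 4) +
      (-5 : ℝ) * h1 (v 0) (v 1) (v 2) (v 4) (v 3) +
      (2 : ℝ) * h3 (v 0) (v 1) (v 2) (v 4) (v 3) +
      (3 : ℝ) * h4 (v 0) (v 1) (v 2) (v 4) (v 3) +
      (6 : ℝ) * h1 (v 0) (v 1) (v 3) (v 2) (v 4) +
      (1 : ℝ) * h2 (v 0) (v 1) (v 3) (v 2) (v 4) +
      (-11 : ℝ) * h3 (v 0) (v 1) (v 3) (v 2) (v 4) +
      (-2 : ℝ) * h1 (v 0) (v 1) (v 3) (v 4) (v 2) +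
      (-1 : ℝ) * h3 (v 0) (v 1) (v 3) (v 4) (v 2) +
      (2 : ℝ) * h1 (v 0) (v 1) (v 4) (v 2) (v 3) +
      (1 : ℝ) * h2 (v 0) (v 1) (v 4) (v 2) (v 3) +
      (-7 : ℝ) * h3 (v 0) (v 1) (v 4) (v 2) (v 3) +
      (-2 : ℝ) * h1 (v 0) (v 1) (v 4) (v 3) (v 2) +
      (-1 : ℝ) * h2 (v 0) (v 1) (v 4) (v 3) (v 2) +
      (1 : ℝ) * h3 (v 0) (v 1) (v 4) (v 3) (v 2) +
      (-1 : ℝ) * h1 (v 0) (v 2) (v 1) (v 3) (v 4) +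
      (16 : ℝ) * h2 (v 0) (v 2) (v 1) (v 3) (v 4) +
      (-4 : ℝ) * h4 (v 0) (v 2) (v 1) (v 3) (v 4) +
      (5 : ℝ) * h2 (v 0) (v 2) (v 1) (v 4) (v 3) +
      (2 : ℝ) * h4 (v 0) (v 2) (v 1) (v 4) (v 3) +
      (1 : ℝ) * h2 (v 0) (v 2) (v 3) (v 1) (v 4) +
      (2 : ℝ) * h1 (v 0) (v 2) (v 3) (v 4) (v 1) +
      (2 : ℝ) * h3 (v 0) (v 2) (v 3) (v 4) (v 1) +
      (1 : ℝ) * h2 (v 0) (v 2) (v 4) (v 1) (v 3) +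
      (-1 : ℝ) * h1 (v 0) (v 2) (v 4) (v 3) (v 1) +
      (-1 : ℝ) * h3 (v 0) (v 2) (v 4) (v 3) (v 1) +
      (-15 : ℝ) * h1 (v 0) (v 3) (v 1) (v 2) (v 4) +
      (16 : ℝ) * h2 (v 0) (v 3) (v 1) (v 2) (v 4) +
      (3 : ℝ) * h4 (v 0) (v 3) (v 1) (v 2) (v 4) +
      (2 : ℝ) * h2 (v 0) (v 3) (v 1) (v 4) (v 2) +
      (-3 : ℝ) * h4 (v 0) (v 3) (v 1) (v 4) (v 2) +
      (15 : ℝ) * h2 (v 0) (v 3) (v 2) (v 1) (v 4) +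
      (-2 : ℝ) * h2 (v 0) (v 3) (v 2) (v 4) (v 1) +
      (-1 : ℝ) * h2 (v 0) (v 3) (v 4) (v 1) (v 2) +
      (1 : ℝ) * h1 (v 0) (v 3) (v 4) (v 2) (v 1) +
      (-7 : ℝ) * h1 (v 0) (v 4) (v 1) (v 2) (v 3) +
      (5 : ℝ) * h2 (v 0) (v 4) (v 1) (v 2) (v 3) +
      (-1 : ℝ) * h1 (v 0) (v 4) (v 1) (v 3) (v 2) +
      (2 : ℝ) * h2 (v 0) (v 4) (v 1) (v 3) (v 2) +
      (7 : ℝ) * h2 (v 0) (v 4) (v 2) (v 1) (v 3) +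
      (-1 : ℝ) * h1 (v 0) (v 4) (v 2) (v 3) (v 1) +
      (-1 : ℝ) * h2 (v 0) (v 4) (v 2) (v 3) (v 1) +
      (-1 : ℝ) * h2 (v 0) (v 4) (v 3) (v 1) (v 2) +
      (1 : ℝ) * h1 (v 0) (v 4) (v 3) (v 2) (v 1) +
      (1 : ℝ) * h2 (v 1) (v 0) (v 2) (v 3) (v 4) +
      (19 : ℝ) * h3 (v 1) (v 0) (v 2) (v 3) (v 4) +
      (5 : ℝ) * h3 (v 1) (v 0) (v 2) (v 4) (v 3) +
      (-1 : ℝ) * h2 (v 1) (v 0) (v 3) (v 2) (v 4) +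
      (-4 : ℝ) * h3 (v 1) (v 0) (v 3) (v 2) (v 4) +
      (2 : ℝ) * h3 (v 1) (v 0) (v 3) (v 4) (v 2) +
      (-1 : ℝ) * h2 (v 1) (v 0) (v 4) (v 2) (v 3) +
      (1 : ℝ) * h2 (v 1) (v 0) (v 4) (v 3) (v 2) +
      (16 : ℝ) * h1 (v 1) (v 2) (v 0) (v 3) (v 4) +
      (4 : ℝ) * h4 (v 1) (v 2) (v 0) (v 3) (v 4) +
      (7 : ℝ) * h1 (v 1) (v 2) (v 0) (v 4) (v 3) +
      (-2 : ℝ) * h4 (v 1) (v 2) (v 0) (v 4) (v 3) +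
      (-16 : ℝ) * h2 (v 1) (v 2) (v 3) (v 0) (v 4) +
      (-2 : ℝ) * h1 (v 1) (v 2) (v 3) (v 4) (v 0) +
      (-2 : ℝ) * h3 (v 1) (v 2) (v 3) (v 4) (v 0) +
      (-8 : ℝ) * h2 (v 1) (v 2) (v 4) (v 0) (v 3) +
      (1 : ℝ) * h1 (v 1) (v 2) (v 4) (v 3) (v 0) +
      (1 : ℝ) * h3 (v 1) (v 2) (v 4) (v 3) (v 0) +
      (-3 : ℝ) * h4 (v 1) (v 3) (v 0) (v 2) (v 4) +
      (-1 : ℝ) * h1 (v 1) (v 3) (v 0) (v 4) (v 2) +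
      (3 : ℝ) * h4 (v 1) (v 3) (v 0) (v 4) (v 2) +
      (2 : ℝ) * h2 (v 1) (v 3) (v 2) (v 4) (v 0) +
      (-1 : ℝ) * h1 (v 1) (v 3) (v 4) (v 2) (v 0) +
      (1 : ℝ) * h1 (v 1) (v 4) (v 2) (v 3) (v 0) +
      (1 : ℝ) * h2 (v 1) (v 4) (v 2) (v 3) (v 0) +
      (-1 : ℝ) * h1 (v 1) (v 4) (v 3) (v 2) (v 0) +
      (-2 : ℝ) * h3 (v 2) (v 0) (v 3) (v 4) (v 1) +
      (1 : ℝ) * h2 (v 2) (v 0) (v 4) (v 3) (v 1) +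
      (-1 : ℝ) * h3 (v 2) (v 0) (v 4) (v 3) (v 1) +
      (2 : ℝ) * h3 (v 2) (v 1) (v 3) (v 4) (v 0) +
      (-1 : ℝ) * h2 (v 2) (v 1) (v 4) (v 3) (v 0) +
      (1 : ℝ) * h3 (v 2) (v 1) (v 4) (v 3) (v 0) +
      (1 : ℝ) * h1 (v 2) (v 3) (v 4) (v 0) (v 1) +
      (-1 : ℝ) * h1 (v 2) (v 3) (v 4) (v 1) (v 0) +
      (1 : ℝ) * h1 (v 2) (v 4) (v 3) (v 0) (v 1) +
      (-1 : ℝ) * h1 (v 2) (v 4) (v 3) (v 1) (v 0)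
  · intro H
    refine ⟨fun x y z w u => ?_, fun x y z w u => ?_, fun x y z w u => ?_, fun x y z w u => ?_⟩
    · have A0 := H ![x, y, z, w, u]
      rw [expand] at A0
      simp only [vec5_0, vec5_1, vec5_2, vec5_3, vec5_4] at A0
      have A1 := H ![y, x, z, w, u]
      rw [expand] at A1
      simp only [vec5_0, vec5_1, vec5_2, vec5_3, vec5_4] at A1
      linear_combination (-1/24 : ℝ) * A0 + (-1/24 : ℝ) * A1
    · have A0 := H ![x, y, z, w, u]
      rw [expand] at A0
      simp only [vec5_0, vec5_1, vec5_2, vec5_3, vec5_4] at A0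
      have A1 := H ![z, w, x, y, u]
      rw [expand] at A1
      simp only [vec5_0, vec5_1, vec5_2, vec5_3, vec5_4] at A1
      linear_combination (-1/24 : ℝ) * A0 + (1/24 : ℝ) * A1
    · have A0 := H ![x, y, z, w, u]
      rw [expand] at A0
      simp only [vec5_0, vec5_1, vec5_2, vec5_3, vec5_4] at A0
      have A1 := H ![x, z, w, y, u]
      rw [expand] at A1
      simp only [vec5_0, vec5_1, vec5_2, vec5_3, vec5_4] at A1
      have A2 := H ![x, w, y, z, u]
      rw [expand] at A2
      simp only [vec5_0, vec5_1, vec5_2, vec5_3, vec5_4] at A2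
      linear_combination (-1/24 : ℝ) * A0 + (-1/24 : ℝ) * A1 + (-1/24 : ℝ) * A2
    · have A0 := H ![x, y, z, w, u]
      rw [expand] at A0
      simp only [vec5_0, vec5_1, vec5_2, vec5_3, vec5_4] at A0
      have A1 := H ![x, y, w, u, z]
      rw [expand] at A1
      simp only [vec5_0, vec5_1, vec5_2, vec5_3, vec5_4] at A1
      have A2 := H ![x, y, u, z, w]
      rw [expand] at A2
      simp only [vec5_0, vec5_1, vec5_2, vec5_3, vec5_4] at A2
      linear_combination (-1/24 : ℝ) * A0 + (-1/24 : ℝ) * A1 + (-1/24 : ℝ) * A2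
end
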